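/- For every integer s ≥ 1, an sP_2-free graph on n vertices has at most n^{2s} maximal independent sets. More precisely (Balas–Yu): the number of maximal independent sets in a graph with no induced subgraph isomorphic to s disjoint edges is bounded by a polynomial in n of degree depending only on s. -/

import Mathlib

/-- The graph `sP_2`: the disjoint union of `s` edges. -/
def sP2 (s : ℕ) : SimpleGraph (Fin s × Fin 2) :=
  SimpleGraph.fromRel (fun x y => x.1 = y.1)

namespace BalasYu

variable {V : Type*} [Fintype V] [DecidableEq V] [Nonempty V]
variable (G : SimpleGraph V) [DecidableRel G.Adj]

/-- Maximal independent set within `W`, in "dominating" form. -/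
def IsMIS (W S : Finset V) : Prop :=
  S ⊆ W ∧ (∀ u ∈ S, ∀ v ∈ S, ¬ G.Adj u v) ∧ ∀ v ∈ W, v ∉ S → ∃ u ∈ S, G.Adj v u

/-- The `S`-support of a vertex `w`: its neighbours inside `S`. -/
def sup (S : Finset V) (w : V) : Finset V := S.filter (fun u => G.Adj w u)

lemma mem_sup {S : Finset V} {w u : V} : u ∈ sup G S w ↔ u ∈ S ∧ G.Adj w u := by
  simp [sup]

/-- There is no induced matching of size `k` inside `W`. -/
def NoIM (W : Finset V) (k : ℕ) : Prop :=
  ¬ ∃ f : Fin k → V × V,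
      (∀ i, (f i).1 ∈ W ∧ (f i).2 ∈ W ∧ G.Adj (f i).1 (f i).2) ∧
      (∀ i j, i ≠ j → ¬ G.Adj (f i).1 (f j).1 ∧ ¬ G.Adj (f i).1 (f j).2 ∧
        ¬ G.Adj (f i).2 (f j).2 ∧ (f i).1 ≠ (f j).1 ∧ (f i).2 ≠ (f j).2) ∧
      (∀ i j, (f i).1 ≠ (f j).2)

/-- Choose a vertex of `W \ S` whose support in `S` has minimum cardinality. -/
noncomputable def pickD (W S : Finset V) (h : (W \ S).Nonempty) : V :=
  (Finset.exists_min_image (W \ S) (fun w => (sup G S w).card) h).choose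

lemma pickD_mem (W S : Finset V) (h : (W \ S).Nonempty) : pickD G W S h ∈ W \ S :=
  (Finset.exists_min_image (W \ S) (fun w => (sup G S w).card) h).choose_spec.1

lemma pickD_min (W S : Finset V) (h : (W \ S).Nonempty) :
    ∀ w ∈ W \ S, (sup G S (pickD G W S h)).card ≤ (sup G S w).card :=
  (Finset.exists_min_image (W \ S) (fun w => (sup G S w).card) h).choose_spec.2

/-- Choose an element of the support of `d`. -/
noncomputable def pickE (S : Finset V) (d : V) : V :=
  if h : (sup G S d).Nonempty then h.choose else Classical.arbitrary V

lemma pickE_mem {S : Finset V} {d : V} (h : (sup G S d).Nonempty) :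
    pickE G S d ∈ sup G S d := by
  rw [pickE, dif_pos h]
  exact h.choose_spec

/-- The next vertex set: remove the closed neighbourhood of `d` and the
neighbourhood of `e`. -/
def nextW (W : Finset V) (d e : V) : Finset V :=
  W.filter fun v => ¬ G.Adj d v ∧ ¬ G.Adj e v ∧ v ≠ d

lemma mem_nextW {W : Finset V} {d e v : V} :
    v ∈ nextW G W d e ↔ v ∈ W ∧ ¬ G.Adj d v ∧ ¬ G.Adj e v ∧ v ≠ d := by
  simp [nextW]

section Step

variable {W S : Finset V}

lemma sup_nonempty_of_junk (hS : IsMIS G W S) {v : V} (hvW : v ∈ W) (hvS : v ∉ S) :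
    (sup G S v).Nonempty := by
  obtain ⟨u, huS, hadj⟩ := hS.2.2 v hvW hvS
  exact ⟨u, (mem_sup G).2 ⟨huS, hadj⟩⟩

lemma supD_nonempty (hS : IsMIS G W S) (h : (W \ S).Nonempty) :
    (sup G S (pickD G W S h)).Nonempty := by
  have hd := pickD_mem G W S h
  rw [Finset.mem_sdiff] at hd
  exact sup_nonempty_of_junk G hS hd.1 hd.2

lemma pickE_memS (hS : IsMIS G W S) (h : (W \ S).Nonempty) :
    pickE G S (pickD G W S h) ∈ S :=
  ((mem_sup G).1 (pickE_mem G (supD_nonempty G hS h))).1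

lemma adj_pick (hS : IsMIS G W S) (h : (W \ S).Nonempty) :
    G.Adj (pickD G W S h) (pickE G S (pickD G W S h)) :=
  ((mem_sup G).1 (pickE_mem G (supD_nonempty G hS h))).2

/-- Key minimality lemma: a junk vertex that is non-adjacent to `e` and to all of
the surviving part of `S` cannot exist. -/
lemma no_hidden (hS : IsMIS G W S) (h : (W \ S).Nonempty) {v : V}
    (hvW : v ∈ W) (hvS : v ∉ S)
    (hve : ¬ G.Adj v (pickE G S (pickD G W S h)))
    (hv3 : ∀ u ∈ nextW G S (pickD G W S h) (pickE G S (pickD G W S h)), ¬ G.Adj v u) :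
    False := by
  have hd := pickD_mem G W S h
  rw [Finset.mem_sdiff] at hd
  have hdS : pickD G W S h ∉ S := hd.2
  have he := pickE_mem G (supD_nonempty G hS h)
  have heS : pickE G S (pickD G W S h) ∈ S := ((mem_sup G).1 he).1
  have hsub : sup G S v ⊆ (sup G S (pickD G W S h)).erase (pickE G S (pickD G W S h)) := by
    intro u hu
    obtain ⟨huS, hvu⟩ := (mem_sup G).1 hu
    have hune : u ≠ pickE G S (pickD G W S h) := by
      rintro rfl; exact hve hvu
    have hu3 : u ∉ nextW G S (pickD G W S h) (pickE G S (pickD G W S h)) := by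
      intro hmem; exact hv3 u hmem hvu
    rw [mem_nextW G] at hu3
    push_neg at hu3
    by_cases hdu : G.Adj (pickD G W S h) u
    · exact Finset.mem_erase.2 ⟨hune, (mem_sup G).2 ⟨huS, hdu⟩⟩
    · by_cases heu : G.Adj (pickE G S (pickD G W S h)) u
      · exact absurd heu (hS.2.1 _ heS _ huS)
      · exact absurd ((hu3 huS hdu heu) ▸ huS) hdS
  have h1 : (sup G S v).card ≤ (sup G S (pickD G W S h)).card - 1 := by
    have hcc := Finset.card_le_card hsub
    rwa [Finset.card_erase_of_mem he] at hcc
  have h2 : (sup G S (pickD G W S h)).card ≤ (sup G S v).card :=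
    pickD_min G W S h v (Finset.mem_sdiff.2 ⟨hvW, hvS⟩)
  have h3 : 0 < (sup G S (pickD G W S h)).card :=
    Finset.card_pos.2 (supD_nonempty G hS h)
  omega

/-- The restricted set is again a maximal independent set of the restricted world. -/
lemma next_mis (hS : IsMIS G W S) (h : (W \ S).Nonempty) :
    IsMIS G (nextW G W (pickD G W S h) (pickE G S (pickD G W S h)))
      (nextW G S (pickD G W S h) (pickE G S (pickD G W S h))) := by
  refine ⟨Finset.filter_subset_filter _ hS.1, ?_, ?_⟩
  · intro u hu v hv
    exact hS.2.1 u (Finset.filter_subset _ _ hu) v (Finset.filter_subset _ _ hv)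
  · intro v hv hv3
    rw [mem_nextW G] at hv
    have hvS : v ∉ S := by
      intro hvS
      exact hv3 ((mem_nextW G).2 ⟨hvS, hv.2⟩)
    by_contra hcon
    push_neg at hcon
    exact no_hidden G hS h hv.1 hvS (fun hadj => hv.2.2.1 hadj.symm) hcon

/-- `S` is recoverable from `(d, e)` and its restriction. -/
lemma decode_eq (hS : IsMIS G W S) (h : (W \ S).Nonempty) :
    S = nextW G S (pickD G W S h) (pickE G S (pickD G W S h)) ∪
          {pickE G S (pickD G W S h)} ∪
        W.filter (fun v => G.Adj (pickD G W S h) v ∧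
          ¬ G.Adj v (pickE G S (pickD G W S h)) ∧
          ∀ u ∈ nextW G S (pickD G W S h) (pickE G S (pickD G W S h)), ¬ G.Adj v u) := by
  have hd := pickD_mem G W S h
  rw [Finset.mem_sdiff] at hd
  have heS := pickE_memS G hS h
  ext v
  constructor
  · intro hvS
    by_cases hv3 : v ∈ nextW G S (pickD G W S h) (pickE G S (pickD G W S h))
    · exact Finset.mem_union_left _ (Finset.mem_union_left _ hv3)
    · by_cases hve : v = pickE G S (pickD G W S h)
      · exact Finset.mem_union_left _ (Finset.mem_union_right _ (by simp [hve]))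
      · rw [mem_nextW G] at hv3
        push_neg at hv3
        have hdv : G.Adj (pickD G W S h) v := by
          by_contra hdv
          by_cases hev : G.Adj (pickE G S (pickD G W S h)) v
          · exact hS.2.1 _ heS _ hvS hev
          · exact hd.2 ((hv3 hvS hdv hev) ▸ hvS)
        refine Finset.mem_union_right _ (Finset.mem_filter.2 ⟨hS.1 hvS, hdv, ?_, ?_⟩)
        · intro hadj; exact hS.2.1 _ hvS _ heS hadj
        · intro u hu hadj
          exact hS.2.1 _ hvS _ (Finset.filter_subset _ _ hu) hadj
  · intro hv
    rcases Finset.mem_union.1 hv with hv | hv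
    · rcases Finset.mem_union.1 hv with hv | hv
      · exact Finset.filter_subset _ _ hv
      · rw [Finset.mem_singleton.1 hv]; exact heS
    · rw [Finset.mem_filter] at hv
      by_contra hvS
      exact no_hidden G hS h hv.1 hvS hv.2.2.1 hv.2.2.2

/-- An induced matching of the restricted world extends by the edge `(d, e)`. -/
lemma next_noim (hS : IsMIS G W S) (h : (W \ S).Nonempty) {t : ℕ}
    (hW : NoIM G W (t + 2)) :
    NoIM G (nextW G W (pickD G W S h) (pickE G S (pickD G W S h))) (t + 1) := by
  rintro ⟨f, hf1, hf2, hf3⟩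
  apply hW
  have hd := pickD_mem G W S h
  rw [Finset.mem_sdiff] at hd
  have heS := pickE_memS G hS h
  have hde := adj_pick G hS h
  -- membership facts for the old matching, unpacked
  have hm1 : ∀ i, (f i).1 ∈ W ∧ ¬ G.Adj (pickD G W S h) (f i).1 ∧
      ¬ G.Adj (pickE G S (pickD G W S h)) (f i).1 ∧ (f i).1 ≠ pickD G W S h := by
    intro i; exact (mem_nextW G).1 (hf1 i).1
  have hm2 : ∀ i, (f i).2 ∈ W ∧ ¬ G.Adj (pickD G W S h) (f i).2 ∧
      ¬ G.Adj (pickE G S (pickD G W S h)) (f i).2 ∧ (f i).2 ≠ pickD G W S h := by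
    intro i; exact (mem_nextW G).1 (hf1 i).2.1
  refine ⟨Fin.snoc f (pickD G W S h, pickE G S (pickD G W S h)), ?_, ?_, ?_⟩
  · intro i
    induction i using Fin.lastCases with
    | last =>
      simp only [Fin.snoc_last]
      exact ⟨hd.1, hS.1 heS, hde⟩
    | cast j =>
      simp only [Fin.snoc_castSucc]
      exact ⟨(hm1 j).1, (hm2 j).1, (hf1 j).2.2⟩
  · intro i j hij
    induction i using Fin.lastCases with
    | last =>
      induction j using Fin.lastCases with
      | last => exact absurd rfl hij
      | cast j =>
        simp only [Fin.snoc_last, Fin.snoc_castSucc]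
        refine ⟨(hm1 j).2.1, (hm2 j).2.1, (hm2 j).2.2.1, fun hh => (hm1 j).2.2.2 hh.symm,
          fun hh => (hm2 j).2.1 (by rw [← hh]; exact hde)⟩
    | cast i =>
      induction j using Fin.lastCases with
      | last =>
        simp only [Fin.snoc_last, Fin.snoc_castSucc]
        refine ⟨fun hh => (hm1 i).2.1 hh.symm, fun hh => (hm1 i).2.2.1 hh.symm,
          fun hh => (hm2 i).2.2.1 hh.symm, (hm1 i).2.2.2,
          fun hh => (hm2 i).2.1 (by rw [hh]; exact hde)⟩
      | cast j =>
        simp only [Fin.snoc_castSucc]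
        exact hf2 i j (fun hcc => hij (by rw [hcc]))
  · intro i j
    induction i using Fin.lastCases with
    | last =>
      induction j using Fin.lastCases with
      | last =>
        simp only [Fin.snoc_last]
        exact hde.ne
      | cast j =>
        simp only [Fin.snoc_last, Fin.snoc_castSucc]
        exact fun hh => (hm2 j).2.2.2 hh.symm
    | cast i =>
      induction j using Fin.lastCases with
      | last =>
        simp only [Fin.snoc_last, Fin.snoc_castSucc]
        exact fun hh => (hm1 i).2.1 (by rw [hh]; exact hde)
      | cast j =>
        simp only [Fin.snoc_castSucc]
        exact hf3 i j

end Step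

/-- The code of a maximal independent set: a sequence of `t` pairs of vertices. -/
noncomputable def encode : (t : ℕ) → Finset V → Finset V → Fin t → V × V
  | 0, _, _ => fun i => i.elim0
  | (t+1), W, S =>
      if h : (W \ S).Nonempty then
        Fin.cons (pickD G W S h, pickE G S (pickD G W S h))
          (encode t (nextW G W (pickD G W S h) (pickE G S (pickD G W S h)))
            (nextW G S (pickD G W S h) (pickE G S (pickD G W S h))))
      else fun _ => (Classical.arbitrary V, Classical.arbitrary V)

theorem encode_inj (t : ℕ) :
    ∀ (W : Finset V), NoIM G W (t + 1) →
      ∀ S S', IsMIS G W S → IsMIS G W S' →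
        encode G t W S = encode G t W S' → S = S' := by
  induction t with
  | zero =>
    intro W hW S S' hS hS' _
    have key : ∀ T, IsMIS G W T → T = W := by
      intro T hT
      refine Finset.Subset.antisymm hT.1 ?_
      intro v hvW
      by_contra hvT
      obtain ⟨u, huT, hadj⟩ := hT.2.2 v hvW hvT
      exact hW ⟨fun _ => (v, u), fun _ => ⟨hvW, hT.1 huT, hadj⟩,
        fun i j hij => absurd (Fin.ext (by omega)) hij, fun _ _ => hadj.ne⟩
    rw [key S hS, key S' hS']
  | succ t ih =>
    intro W hW S S' hS hS' hcode
    simp only [encode] at hcode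
    by_cases h : (W \ S).Nonempty <;> by_cases h' : (W \ S').Nonempty
    · -- both still have junk
      rw [dif_pos h, dif_pos h'] at hcode
      have h0 := congrFun hcode 0
      simp only [Fin.cons_zero] at h0
      rw [Prod.mk.injEq] at h0
      obtain ⟨hdd, hee⟩ := h0
      rw [← hdd] at hee
      have htail : encode G t
          (nextW G W (pickD G W S h) (pickE G S (pickD G W S h)))
          (nextW G S (pickD G W S h) (pickE G S (pickD G W S h))) =
          encode G t
          (nextW G W (pickD G W S h) (pickE G S (pickD G W S h)))
          (nextW G S' (pickD G W S h) (pickE G S (pickD G W S h))) := by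
        funext i
        have hci := congrFun hcode i.succ
        simp only [Fin.cons_succ] at hci
        rw [← hdd, ← hee] at hci
        exact hci
      have hS'3 := next_mis G hS' h'
      rw [← hdd, ← hee] at hS'3
      have hS3 := next_mis G hS h
      have hnoim3 := next_noim G hS h hW
      have hrestr := ih _ hnoim3 _ _ hS3 hS'3 htail
      have hdecS := decode_eq G hS h
      have hdecS' := decode_eq G hS' h'
      rw [← hdd, ← hee] at hdecS'
      rw [hdecS, hdecS', hrestr]
    · exfalso
      rw [dif_pos h, dif_neg h'] at hcode
      have h0 := congrFun hcode 0
      simp only [Fin.cons_zero] at h0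
      rw [Prod.mk.injEq] at h0
      exact (adj_pick G hS h).ne (h0.1.trans h0.2.symm)
    · exfalso
      rw [dif_neg h, dif_pos h'] at hcode
      have h0 := congrFun hcode 0
      simp only [Fin.cons_zero] at h0
      rw [Prod.mk.injEq] at h0
      exact (adj_pick G hS' h').ne (h0.1.symm.trans h0.2)
    · have hW1 : W ⊆ S := by
        rw [Finset.not_nonempty_iff_eq_empty, Finset.sdiff_eq_empty_iff_subset] at h
        exact h
      have hW2 : W ⊆ S' := by
        rw [Finset.not_nonempty_iff_eq_empty, Finset.sdiff_eq_empty_iff_subset] at h'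
        exact h'
      rw [Finset.Subset.antisymm hS.1 hW1, Finset.Subset.antisymm hS'.1 hW2]

/-- `sP2 s`-freeness yields: no induced matching of size `s`. -/
lemma noim_univ_of_free {s : ℕ} (hfree : IsEmpty (sP2 s ↪g G)) :
    NoIM G Finset.univ s := by
  rintro ⟨f, hf1, hf2, hf3⟩
  have h2 : ∀ c : Fin 2, c = 0 ∨ c = 1 := by decide
  apply hfree.false
  refine ⟨⟨fun p => if p.2 = 0 then (f p.1).1 else (f p.1).2, ?_⟩, ?_⟩
  · rintro ⟨i, ci⟩ ⟨j, cj⟩ hpq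
    simp only at hpq
    rcases h2 ci with rfl | rfl <;> rcases h2 cj with rfl | rfl
    · rw [if_pos rfl, if_pos rfl] at hpq
      by_cases hij : i = j
      · rw [hij]
      · exact absurd hpq (hf2 i j hij).2.2.2.1
    · rw [if_pos rfl, if_neg (by decide : ¬ (1 : Fin 2) = 0)] at hpq
      exact absurd hpq (hf3 i j)
    · rw [if_neg (by decide : ¬ (1 : Fin 2) = 0), if_pos rfl] at hpq
      exact absurd hpq.symm (hf3 j i)
    · rw [if_neg (by decide : ¬ (1 : Fin 2) = 0),
        if_neg (by decide : ¬ (1 : Fin 2) = 0)] at hpq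
      by_cases hij : i = j
      · rw [hij]
      · exact absurd hpq (hf2 i j hij).2.2.2.2
  · rintro ⟨i, ci⟩ ⟨j, cj⟩
    simp only [Function.Embedding.coeFn_mk, sP2, SimpleGraph.fromRel_adj, ne_eq,
      Prod.mk.injEq, not_and]
    show G.Adj (if ci = 0 then (f i).1 else (f i).2) (if cj = 0 then (f j).1 else (f j).2) ↔ _
    constructor
    · intro hadj
      rcases h2 ci with rfl | rfl <;> rcases h2 cj with rfl | rfl
      · rw [if_pos rfl, if_pos rfl] at hadj
        by_cases hij : i = j
        · subst hij; exact absurd hadj (G.irrefl)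
        · exact absurd hadj (hf2 i j hij).1
      · rw [if_pos rfl, if_neg (by decide : ¬ (1 : Fin 2) = 0)] at hadj
        by_cases hij : i = j
        · subst hij
          exact ⟨fun _ => by decide, Or.inl rfl⟩
        · exact absurd hadj (hf2 i j hij).2.1
      · rw [if_neg (by decide : ¬ (1 : Fin 2) = 0), if_pos rfl] at hadj
        by_cases hij : i = j
        · subst hij
          exact ⟨fun _ => by decide, Or.inl rfl⟩
        · exact absurd hadj.symm (hf2 j i (fun hh => hij hh.symm)).2.1
      · rw [if_neg (by decide : ¬ (1 : Fin 2) = 0),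
          if_neg (by decide : ¬ (1 : Fin 2) = 0)] at hadj
        by_cases hij : i = j
        · subst hij; exact absurd hadj (G.irrefl)
        · exact absurd hadj (hf2 i j hij).2.2.1
    · rintro ⟨hne, hor⟩
      have hij : i = j := by
        rcases hor with hh | hh
        · exact hh
        · exact hh.symm
      subst hij
      have hcc : ci ≠ cj := hne rfl
      rcases h2 ci with rfl | rfl <;> rcases h2 cj with rfl | rfl
      · exact absurd rfl hcc
      · rw [if_pos rfl, if_neg (by decide : ¬ (1 : Fin 2) = 0)]
        exact (hf1 i).2.2
      · rw [if_neg (by decide : ¬ (1 : Fin 2) = 0), if_pos rfl]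
        exact (hf1 i).2.2.symm
      · exact absurd rfl hcc

end BalasYu

/-- Balas–Yu: an `sP_2`-free graph on `n ≥ 1` vertices has at most `n^(2s)` maximal
independent sets. -/
theorem stmt15 {V : Type*} [Fintype V] [Nonempty V] (G : SimpleGraph V)
    (s : ℕ) (hs : 1 ≤ s)
    (hfree : IsEmpty (sP2 s ↪g G)) :
    {S : Finset V | (∀ ⦃u⦄, u ∈ S → ∀ ⦃v⦄, v ∈ S → ¬ G.Adj u v) ∧
        ∀ T : Finset V, (∀ ⦃u⦄, u ∈ T → ∀ ⦃v⦄, v ∈ T → ¬ G.Adj u v) → S ⊆ T → T = S}.ncard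
      ≤ (Fintype.card V) ^ (2 * s) := by
  classical
  letI : DecidableEq V := Classical.decEq V
  letI : DecidableRel G.Adj := fun _ _ => Classical.dec _
  set 𝒮 : Set (Finset V) :=
    {S : Finset V | (∀ ⦃u⦄, u ∈ S → ∀ ⦃v⦄, v ∈ S → ¬ G.Adj u v) ∧
        ∀ T : Finset V, (∀ ⦃u⦄, u ∈ T → ∀ ⦃v⦄, v ∈ T → ¬ G.Adj u v) → S ⊆ T → T = S}
    with h𝒮
  have hmem : ∀ S : Finset V, S ∈ 𝒮 ↔ BalasYu.IsMIS G Finset.univ S := by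
    intro S
    rw [h𝒮]
    constructor
    · rintro ⟨hind, hmax⟩
      refine ⟨Finset.subset_univ _, fun u hu v hv => hind hu hv, ?_⟩
      intro v _ hvS
      by_contra hcon
      push_neg at hcon
      have hT : ∀ ⦃a⦄, a ∈ insert v S → ∀ ⦃b⦄, b ∈ insert v S → ¬ G.Adj a b := by
        intro a ha b hb hadj
        rcases Finset.mem_insert.1 ha with ha' | ha'
        · rcases Finset.mem_insert.1 hb with hb' | hb'
          · rw [ha', hb'] at hadj; exact G.irrefl hadj
          · rw [ha'] at hadj; exact hcon b hb' hadj
        · rcases Finset.mem_insert.1 hb with hb' | hb'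
          · rw [hb'] at hadj; exact hcon a ha' hadj.symm
          · exact hind ha' hb' hadj
      have heq := hmax (insert v S) hT (Finset.subset_insert _ _)
      exact hvS (heq ▸ Finset.mem_insert_self v S)
    · rintro ⟨-, hind, hdom⟩
      refine ⟨fun u hu v hv => hind u hu v hv, ?_⟩
      intro T hT hST
      by_contra hne
      have hx : ∃ x ∈ T, x ∉ S := by
        by_contra hcc
        push_neg at hcc
        exact hne (Finset.Subset.antisymm hcc hST)
      obtain ⟨x, hxT, hxS⟩ := hx
      obtain ⟨u, huS, hxu⟩ := hdom x (Finset.mem_univ x) hxS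
      exact hT hxT (hST huS) hxu
  have hnoim : BalasYu.NoIM G Finset.univ ((s - 1) + 1) := by
    rw [Nat.sub_add_cancel hs]
    exact BalasYu.noim_univ_of_free G hfree
  have hinj : Set.InjOn (BalasYu.encode G (s - 1) Finset.univ) 𝒮 := by
    intro S hSmem S' hS'mem hcode
    exact BalasYu.encode_inj G (s - 1) Finset.univ hnoim S S'
      ((hmem S).1 hSmem) ((hmem S').1 hS'mem) hcode
  have hle : 𝒮.ncard ≤ (Set.univ : Set (Fin (s - 1) → V × V)).ncard :=
    Set.ncard_le_ncard_of_injOn _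
      (fun a _ => Set.mem_univ (BalasYu.encode G (s - 1) Finset.univ a))
      hinj Set.finite_univ
  refine le_trans hle ?_
  rw [Set.ncard_univ, Nat.card_eq_fintype_card]
  have hcard : Fintype.card (Fin (s - 1) → V × V) =
      (Fintype.card V * Fintype.card V) ^ (s - 1) := by
    rw [Fintype.card_fun, Fintype.card_prod, Fintype.card_fin]
  rw [hcard]
  have h1 : 1 ≤ Fintype.card V := Fintype.card_pos
  calc (Fintype.card V * Fintype.card V) ^ (s - 1)
      = (Fintype.card V) ^ (2 * (s - 1)) := by rw [← pow_two, ← pow_mul]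
    _ ≤ (Fintype.card V) ^ (2 * s) := Nat.pow_le_pow_right h1 (by omega)
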